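/- For any edge {u,v} of a simple graph G, the two triple local complementations agree: ((G * u) * v) * u = ((G * v) * u) * v. -/

import Mathlib

/-- Local complementation of a simple graph `G` at a vertex `u`: toggles all
edges between pairs of distinct neighbors of `u`, leaving all other edges unchanged. -/
def localComp {V : Type*} (G : SimpleGraph V) (u : V) : SimpleGraph V where
  Adj v w := v ≠ w ∧ Xor' (G.Adj v w) (G.Adj u v ∧ G.Adj u w)
  symm := by
    constructor
    rintro v w ⟨h1, h2⟩
    refine ⟨h1.symm, ?_⟩
    rwa [G.adj_comm w v, and_comm]
  loopless := by constructor; rintro v ⟨h, _⟩; exact h rfl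

lemma localComp_adj {V : Type*} (G : SimpleGraph V) (u x y : V) :
    (localComp G u).Adj x y ↔ x ≠ y ∧ Xor' (G.Adj x y) (G.Adj u x ∧ G.Adj u y) := Iff.rfl

/-- For any edge `{u,v}` of `G`, the two triple local complementations agree:
`((G * u) * v) * u = ((G * v) * u) * v`. -/
theorem pivot_well_defined {V : Type*} (G : SimpleGraph V) (u v : V) (huv : G.Adj u v) :
    localComp (localComp (localComp G u) v) u = localComp (localComp (localComp G v) u) v := by
  have hvu := huv.symm
  have hne : u ≠ v := huv.ne
  ext x y
  by_cases hxu : x = u <;> by_cases hxv : x = v <;> by_cases hyu : y = u <;> by_cases hyv : y = v <;>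
    subst_vars <;>
    simp only [localComp_adj, Xor', ne_eq, huv, hvu, hne, hne.symm, SimpleGraph.irrefl,
      not_false_eq_true, not_true, true_and, false_and, and_false, and_true, or_false, false_or,
      not_false_iff, and_self] <;>
  first
  | rfl
  | (try by_cases a : G.Adj x y) <;> (try by_cases b : G.Adj u x) <;> (try by_cases c : G.Adj u y) <;>
    (try by_cases d : G.Adj v x) <;> (try by_cases e : G.Adj v y) <;>
    simp_all [eq_comm, Xor]
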